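/- Let A be a Banach algebra, X a Banach A-bimodule, and D : A → X* a derivation such that its double adjoint D'' : A** → X*** is also a derivation (with respect to the first Arens product on A** and the canonical A**-bimodule structure on X***) and D'' is surjective. Then for every x'' in X**, the map F ↦ x''·F from A** to X** is weak*-to-weak continuous. -/

import Mathlib

open NormedSpace ContinuousLinearMap Filter

noncomputable section

namespace NormedSpace

/-- The topological dual of a seminormed space `E` (the old Mathlib `NormedSpace.Dual`,
no longer in Mathlib; restored here verbatim with its helper instances). -/
abbrev Dual (𝕜 : Type*) [NontriviallyNormedField 𝕜] (E : Type*) [SeminormedAddCommGroup E]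
    [NormedSpace 𝕜 E] : Type _ :=
  E →L[𝕜] 𝕜

instance (𝕜 : Type*) [NontriviallyNormedField 𝕜] (E : Type*) [SeminormedAddCommGroup E]
    [NormedSpace 𝕜 E] : NormedSpace 𝕜 (Dual 𝕜 E) :=
  inferInstance

instance (𝕜 : Type*) [NontriviallyNormedField 𝕜] (E : Type*) [SeminormedAddCommGroup E]
    [NormedSpace 𝕜 E] : SeminormedAddCommGroup (Dual 𝕜 E) :=
  inferInstance

end NormedSpace

/-- The adjoint (dual map) of a continuous linear map: `dMap T φ = φ ∘ T`. -/
def dMap {E F : Type*} [NormedAddCommGroup E] [NormedSpace ℝ E]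
    [NormedAddCommGroup F] [NormedSpace ℝ F] (T : E →L[ℝ] F) :
    Dual ℝ F →L[ℝ] Dual ℝ E :=
  (ContinuousLinearMap.compL ℝ E F ℝ).flip T

/-- The double adjoint of a continuous linear map. -/
def ddMap {E F : Type*} [NormedAddCommGroup E] [NormedSpace ℝ E]
    [NormedAddCommGroup F] [NormedSpace ℝ F] (T : E →L[ℝ] F) :
    Dual ℝ (Dual ℝ E) →L[ℝ] Dual ℝ (Dual ℝ F) :=
  dMap (dMap T)

/-- The (first, left) Arens extension of a bounded bilinear map `m : E × F → G` to the
biduals, via the classical three steps: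
`⟨g'·e, f⟩ = ⟨g', m e f⟩`, `⟨Ψ·g', e⟩ = ⟨Ψ, g'·e⟩`, `⟨arensExt m Φ Ψ, g'⟩ = ⟨Φ, Ψ·g'⟩`. -/
def arensExt {E F G : Type*} [NormedAddCommGroup E] [NormedSpace ℝ E]
    [NormedAddCommGroup F] [NormedSpace ℝ F] [NormedAddCommGroup G] [NormedSpace ℝ G]
    (m : E →L[ℝ] F →L[ℝ] G) :
    Dual ℝ (Dual ℝ E) →L[ℝ] Dual ℝ (Dual ℝ F) →L[ℝ] Dual ℝ (Dual ℝ G) :=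
  let s1 : E →L[ℝ] (Dual ℝ G →L[ℝ] Dual ℝ F) :=
    ((ContinuousLinearMap.compL ℝ F G ℝ).flip).comp m
  let s2 : Dual ℝ G →L[ℝ] (Dual ℝ (Dual ℝ F) →L[ℝ] Dual ℝ E) :=
    ((ContinuousLinearMap.compL ℝ E (Dual ℝ F) ℝ).flip).comp s1.flip
  (((ContinuousLinearMap.compL ℝ (Dual ℝ G) (Dual ℝ E) ℝ).flip).comp s2.flip).flip

/-- The first Arens product on the bidual of a (possibly non-unital) Banach algebra:
`⟨F G, a'⟩ = ⟨F, G·a'⟩` where `⟨G·a', a⟩ = ⟨G, a'·a⟩` and `⟨a'·a, b⟩ = ⟨a', a*b⟩`. -/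
def arens1 (A : Type*) [NonUnitalNormedRing A] [NormedSpace ℝ A]
    [IsScalarTower ℝ A A] [SMulCommClass ℝ A A] :
    Dual ℝ (Dual ℝ A) →L[ℝ] Dual ℝ (Dual ℝ A) →L[ℝ] Dual ℝ (Dual ℝ A) :=
  arensExt (ContinuousLinearMap.mul ℝ A)

/-- The second Arens product on the bidual of a (possibly non-unital) Banach algebra:
`⟨F ∘ G, a'⟩ = ⟨G, a'∘F⟩` where `⟨a'∘F, a⟩ = ⟨F, a∘a'⟩` and `⟨a∘a', b⟩ = ⟨a', b*a⟩`. -/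
def arens2 (A : Type*) [NonUnitalNormedRing A] [NormedSpace ℝ A]
    [IsScalarTower ℝ A A] [SMulCommClass ℝ A A] :
    Dual ℝ (Dual ℝ A) →L[ℝ] Dual ℝ (Dual ℝ A) →L[ℝ] Dual ℝ (Dual ℝ A) :=
  (arensExt ((ContinuousLinearMap.mul ℝ A).flip)).flip

/-- `f`, a map from a dual space to a normed space, is weak-star-to-weak continuous. -/
def WstarToWeakContinuous {E F : Type*} [NormedAddCommGroup E] [NormedSpace ℝ E]
    [NormedAddCommGroup F] [NormedSpace ℝ F]
    (f : Dual ℝ E → F) : Prop :=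
  Continuous fun x : WeakDual ℝ E => toWeakSpace ℝ F (f x)
variable {A : Type*} [NonUnitalNormedRing A] [NormedSpace ℝ A]
  [IsScalarTower ℝ A A] [SMulCommClass ℝ A A] [CompleteSpace A]
variable {X : Type*} [NormedAddCommGroup X] [NormedSpace ℝ X] [CompleteSpace X]


/-- Auxiliary: the "second step" map `Ψ · g'` in the Arens construction, so that
`arensExt m Φ Ψ g' = Φ (arensStep m Ψ g')` holds definitionally. -/
def arensStep {E F G : Type*} [NormedAddCommGroup E] [NormedSpace ℝ E]
    [NormedAddCommGroup F] [NormedSpace ℝ F] [NormedAddCommGroup G] [NormedSpace ℝ G]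
    (m : E →L[ℝ] F →L[ℝ] G) (Ψ : Dual ℝ (Dual ℝ F)) : Dual ℝ G →L[ℝ] Dual ℝ E :=
  ((((ContinuousLinearMap.compL ℝ E (Dual ℝ F) ℝ).flip).comp
    ((((ContinuousLinearMap.compL ℝ F G ℝ).flip).comp m).flip)).flip) Ψ

lemma arensExt_apply' {E F G : Type*} [NormedAddCommGroup E] [NormedSpace ℝ E]
    [NormedAddCommGroup F] [NormedSpace ℝ F] [NormedAddCommGroup G] [NormedSpace ℝ G]
    (m : E →L[ℝ] F →L[ℝ] G) (Φ : Dual ℝ (Dual ℝ E)) (Ψ : Dual ℝ (Dual ℝ F))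
    (g' : Dual ℝ G) : arensExt m Φ Ψ g' = Φ (arensStep m Ψ g') := rfl

lemma ddMap_apply' {E F : Type*} [NormedAddCommGroup E] [NormedSpace ℝ E]
    [NormedAddCommGroup F] [NormedSpace ℝ F] (T : E →L[ℝ] F)
    (Φ : Dual ℝ (Dual ℝ E)) (ψ : Dual ℝ F) :
    ddMap T Φ ψ = Φ (dMap T ψ) := rfl

/-- If `D : A → X*` is a derivation whose double adjoint `D'' : A** → X***` is a surjective
derivation (first Arens product, canonical `A**`-bimodule structure on `X***`), then for
every `x'' ∈ X**` the map `F ↦ x''·F` is weak-star-to-weak continuous. -/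
theorem wstarw_of_bidual_derivation_surjective
    -- `l` is the left action, `r a x = x · a` is the right action of the bimodule `X`
    (l r : A →L[ℝ] X →L[ℝ] X)
    (hl : ∀ a b : A, l (a * b) = (l a).comp (l b))
    (hr : ∀ a b : A, r (a * b) = (r b).comp (r a))
    (hc : ∀ a b : A, (l a).comp (r b) = (r b).comp (l a))
    (D : A →L[ℝ] Dual ℝ X)
    (hD : ∀ a b : A, D (a * b) = dMap (r a) (D b) + dMap (l b) (D a))
    (hD'' : ∀ F G : Dual ℝ (Dual ℝ A),
      ddMap D (arens1 A F G) =
        dMap ((arensExt r.flip).flip F) (ddMap D G) + dMap (arensExt l G) (ddMap D F))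
    (hsurj : Function.Surjective (ddMap D))
    (x'' : Dual ℝ (Dual ℝ X)) :
    WstarToWeakContinuous fun F : Dual ℝ (Dual ℝ A) => arensExt r.flip x'' F := by
  -- Key computation: for every `G`, the functional `D''G` evaluated on `x''·F`
  -- is given by pairing `F` with a fixed element of `A*`.
  have key : ∀ G F : Dual ℝ (Dual ℝ A),
      (ddMap D G) (arensExt r.flip x'' F)
        = F (arensStep (ContinuousLinearMap.mul ℝ A) G (dMap D x'')
              - dMap D (arensExt l G x'')) := by
    intro G F
    have h := congrArg (fun Ψ : Dual ℝ (Dual ℝ (Dual ℝ X)) => Ψ x'') (hD'' F G)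
    simp only [ContinuousLinearMap.add_apply, dMap, ContinuousLinearMap.flip_apply,
      ContinuousLinearMap.compL_apply, ContinuousLinearMap.comp_apply] at h
    have h1 : ddMap D (arens1 A F G) x''
        = F (arensStep (ContinuousLinearMap.mul ℝ A) G (dMap D x'')) := rfl
    have h2 : (ddMap D G) ((arensExt r.flip).flip F x'')
        = (ddMap D G) (arensExt r.flip x'' F) := rfl
    have h3 : (ddMap D F) (arensExt l G x'') = F (dMap D (arensExt l G x'')) := rfl
    rw [map_sub]
    have h' : ddMap D (arens1 A F G) x''
        = (ddMap D G) ((arensExt r.flip).flip F x'') + (ddMap D F) (arensExt l G x'') := h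
    rw [h1, h2, h3] at h'
    linarith
  refine WeakBilin.continuous_of_continuous_eval _ fun Φ => ?_
  obtain ⟨G, rfl⟩ := hsurj Φ
  have : (fun F : WeakDual ℝ (Dual ℝ A) =>
      (topDualPairing ℝ (Dual ℝ (Dual ℝ X))).flip
        (toWeakSpace ℝ (Dual ℝ (Dual ℝ X)) (arensExt r.flip x'' F)) (ddMap D G))
      = fun F : WeakDual ℝ (Dual ℝ A) =>
        F (arensStep (ContinuousLinearMap.mul ℝ A) G (dMap D x'')
            - dMap D (arensExt l G x'')) := by
    funext F
    exact key G F
  rw [this]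
  exact WeakDual.eval_continuous _
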